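/- With γ = −2/(ν+m+n) and the t³VAE joint model p_{θ,ν}(x,z) = C_{ν,m+n}σ^{−n}[1 + ν^{−1}(‖z‖² + σ^{−2}‖x−μ_θ(z)‖²)]^{−(ν+m+n)/2}, one has ∬ p_{θ,ν}(x,z)^{1+γ} dx dz = σ^{−γn}·C_{ν,m+n}^γ·(1 + (m+n)/(ν−2)), for ν > 2. -/

import Mathlib

open MeasureTheory

noncomputable def tC (ν : ℝ) (d : ℕ) : ℝ :=
  Real.Gamma ((ν + d) / 2) / (Real.Gamma (ν / 2) * (ν * Real.pi) ^ ((d : ℝ) / 2))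

noncomputable def pjoint (m n : ℕ) (ν σ : ℝ) (μ : (Fin m → ℝ) → Fin n → ℝ)
    (x : Fin n → ℝ) (z : Fin m → ℝ) : ℝ :=
  tC ν (m + n) * (σ ^ n)⁻¹ *
    (1 + (1 / ν) * ((∑ i, z i ^ 2) + (∑ j, (x j - μ z j) ^ 2) / σ ^ 2))
      ^ (-(ν + m + n) / 2)

open Real Set in
private lemma realBeta (a b : ℝ) (ha : 0 < a) (hb : 0 < b) :
    ∫ x in (0:ℝ)..1, x ^ (a-1) * (1-x) ^ (b-1) = Gamma a * Gamma b / Gamma (a+b) := by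
  have key := Complex.Gamma_mul_Gamma_eq_betaIntegral (s := (a:ℂ)) (t := (b:ℂ))
    (by simpa using ha) (by simpa using hb)
  rw [Complex.betaIntegral] at key
  have heq : ∀ x ∈ uIcc (0:ℝ) 1,
      (x:ℂ) ^ ((a:ℂ)-1) * (1-(x:ℂ)) ^ ((b:ℂ)-1)
        = ((x ^ (a-1) * (1-x) ^ (b-1) : ℝ) : ℂ) := by
    intro x hx
    rw [uIcc_of_le (by norm_num)] at hx
    rw [Complex.ofReal_mul, Complex.ofReal_cpow hx.1, Complex.ofReal_cpow (by linarith [hx.2])]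
    push_cast; ring
  rw [intervalIntegral.integral_congr heq, intervalIntegral.integral_ofReal] at key
  have h2 : Gamma a * Gamma b = Gamma (a+b) * ∫ x in (0:ℝ)..1, x ^ (a-1) * (1-x) ^ (b-1) := by
    have := key
    rw [← Complex.ofReal_add, Complex.Gamma_ofReal, Complex.Gamma_ofReal, Complex.Gamma_ofReal,
      ← Complex.ofReal_mul, ← Complex.ofReal_mul] at this
    exact_mod_cast this
  have hG : Gamma (a+b) ≠ 0 := (Real.Gamma_pos_of_pos (by linarith)).ne'
  field_simp [h2]
  rw [h2]; ring

open Real Set in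
private lemma betaIoi (a b : ℝ) (ha : 0 < a) (hb : 0 < b) :
    ∫ t in Ioi (0:ℝ), t ^ (a-1) * (1+t) ^ (-(a+b)) = Gamma a * Gamma b / Gamma (a+b) := by
  have himg : (fun u : ℝ => u / (1 - u)) '' Ioo 0 1 = Ioi 0 := by
    ext y; simp only [mem_image, mem_Ioo, mem_Ioi]
    constructor
    · rintro ⟨u, ⟨h0, h1⟩, rfl⟩
      exact div_pos h0 (by linarith)
    · intro hy
      refine ⟨y / (1 + y), ⟨by positivity, by rw [div_lt_one (by linarith)]; linarith⟩, ?_⟩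
      have h1 : (1:ℝ) - y / (1+y) = 1/(1+y) := by field_simp; ring
      rw [h1]; field_simp
  have hderiv : ∀ u ∈ Ioo (0:ℝ) 1, HasDerivWithinAt (fun u : ℝ => u / (1-u))
      ((1-u)⁻¹ ^ 2) (Ioo 0 1) u := by
    intro u hu
    have h1 : (1:ℝ) - u ≠ 0 := by simp only [mem_Ioo] at hu; intro h; linarith [hu.2]
    have := ((hasDerivAt_id u).div ((hasDerivAt_id u).const_sub 1) h1)
    exact this.hasDerivWithinAt.congr_deriv (by simp only [id]; field_simp; ring)
  have hinj : InjOn (fun u : ℝ => u / (1-u)) (Ioo 0 1) := by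
    intro u hu v hv h
    simp only [mem_Ioo] at hu hv
    have h1 : (1:ℝ) - u ≠ 0 := by intro h; linarith [hu.2]
    have h2 : (1:ℝ) - v ≠ 0 := by intro h; linarith [hv.2]
    field_simp at h; linarith
  rw [← himg, integral_image_eq_integral_abs_deriv_smul measurableSet_Ioo hderiv hinj]
  have hcongr : ∀ u ∈ Ioo (0:ℝ) 1,
      |(1-u)⁻¹ ^ 2| • ((u/(1-u)) ^ (a-1) * (1+u/(1-u)) ^ (-(a+b)))
        = u ^ (a-1) * (1-u) ^ (b-1) := by
    intro u hu
    simp only [mem_Ioo] at hu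
    have h0 : (0:ℝ) < u := hu.1
    have h1 : (0:ℝ) < 1 - u := by linarith [hu.2]
    have e1 : (1:ℝ) + u/(1-u) = (1-u)⁻¹ := by field_simp; ring
    have A : |(1-u)⁻¹ ^ 2| = (1-u) ^ (-2 : ℝ) := by
      rw [abs_of_nonneg (by positivity), Real.rpow_neg h1.le, Real.rpow_two, inv_pow]
    have B : (u/(1-u)) ^ (a-1) = u ^ (a-1) * ((1-u) ^ (a-1))⁻¹ := by
      rw [div_rpow h0.le h1.le, div_eq_mul_inv]
    have Cc : ((1:ℝ) + u/(1-u)) ^ (-(a+b)) = (1-u) ^ (a+b) := by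
      rw [e1, Real.inv_rpow h1.le, ← Real.rpow_neg h1.le, neg_neg]
    rw [smul_eq_mul, A, B, Cc, ← Real.rpow_neg h1.le (a-1),
      show b - 1 = -2 + (-(a-1) + (a+b)) by ring,
      Real.rpow_add h1, Real.rpow_add h1]
    ring_nf
    rw [show (1:ℝ) + b = 1 - a + a + b by ring, Real.rpow_add h1, Real.rpow_add h1]
    ring
  rw [setIntegral_congr_fun measurableSet_Ioo hcongr, ← integral_Ioc_eq_integral_Ioo,
    ← intervalIntegral.integral_of_le zero_le_one]
  exact realBeta a b ha hb

open Real Set in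
private lemma radial (k : ℕ) (hk : 1 ≤ k) (s : ℝ) (hs : (k:ℝ)/2 < s) :
    ∫ y in Ioi (0:ℝ), y ^ (k-1) * (1+y^2) ^ (-s)
      = (1/2) * (Gamma ((k:ℝ)/2) * Gamma (s - (k:ℝ)/2) / Gamma s) := by
  have hk0 : (0:ℝ) < (k:ℝ)/2 := by
    have : (1:ℝ) ≤ (k:ℝ) := by exact_mod_cast hk
    linarith
  have key := integral_comp_rpow_Ioi
    (fun t => (1/2) * (t ^ ((k:ℝ)/2 - 1) * (1+t) ^ (-s))) (p := 2) two_ne_zero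
  have hcongr : ∀ x ∈ Ioi (0:ℝ),
      (|2| * x ^ ((2:ℝ)-1)) • ((1/2) * ((x ^ (2:ℝ)) ^ ((k:ℝ)/2 - 1) * (1+x ^ (2:ℝ)) ^ (-s)))
        = x ^ (k-1) * (1+x^2) ^ (-s) := by
    intro x hx
    have hx : (0:ℝ) < x := hx
    rw [smul_eq_mul, ← Real.rpow_mul hx.le,
      show (2:ℝ) * ((k:ℝ)/2 - 1) = (k:ℝ) - 2 by ring,
      show ((2:ℝ)) - 1 = 1 by norm_num, Real.rpow_one,
      show x ^ (2:ℝ) = x^2 from by rw [← Real.rpow_natCast x 2]; norm_num,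
      ← Real.rpow_natCast x (k-1), Nat.cast_sub hk, Nat.cast_one,
      show (k:ℝ) - 1 = ((k:ℝ) - 2) + 1 by ring, Real.rpow_add hx, Real.rpow_one,
      abs_of_pos two_pos]
    ring
  rw [← setIntegral_congr_fun measurableSet_Ioi hcongr, key, integral_const_mul,
    show -s = -((k:ℝ)/2 + (s - (k:ℝ)/2)) by ring,
    betaIoi ((k:ℝ)/2) (s - (k:ℝ)/2) hk0 (by linarith),
    show (k:ℝ)/2 + (s - (k:ℝ)/2) = s by ring]

open Real Set in
private lemma I0E (k : ℕ) (hk : 1 ≤ k) (s : ℝ) (hs : (k:ℝ)/2 < s) :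
    ∫ x : EuclideanSpace ℝ (Fin k), (1 + ‖x‖^2) ^ (-s)
      = π ^ ((k:ℝ)/2) * Gamma (s - (k:ℝ)/2) / Gamma s := by
  have hk0 : (0:ℝ) < (k:ℝ)/2 := by
    have : (1:ℝ) ≤ (k:ℝ) := by exact_mod_cast hk
    linarith
  haveI : Nonempty (Fin k) := Fin.pos_iff_nonempty.mp hk
  have hdim : Module.finrank ℝ (EuclideanSpace ℝ (Fin k)) = k := finrank_euclideanSpace_fin
  rw [MeasureTheory.integral_fun_norm_addHaar (volume : Measure (EuclideanSpace ℝ (Fin k)))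
    (fun r => (1 + r^2) ^ (-s))]
  rw [hdim]
  rw [measureReal_def, EuclideanSpace.volume_ball]
  simp only [smul_eq_mul, Fintype.card_fin, one_pow, ENNReal.ofReal_one, one_mul]
  rw [radial k hk s hs, ENNReal.toReal_ofReal (by positivity)]
  have hsq : (√π : ℝ) ^ k = π ^ ((k:ℝ)/2) := by
    rw [Real.sqrt_eq_rpow, ← Real.rpow_natCast (π ^ ((1:ℝ)/2)) k, ← Real.rpow_mul pi_pos.le]
    ring_nf
  have hG1 : Gamma ((k:ℝ)/2 + 1) = ((k:ℝ)/2) * Gamma ((k:ℝ)/2) := Real.Gamma_add_one hk0.ne'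
  have hGk : Gamma ((k:ℝ)/2) ≠ 0 := (Real.Gamma_pos_of_pos hk0).ne'
  have hGs : Gamma s ≠ 0 := (Real.Gamma_pos_of_pos (by linarith)).ne'
  rw [hsq, hG1]
  have hkne : (k:ℝ) ≠ 0 := (by linarith : (0:ℝ) < k).ne'
  field_simp
  ring_nf
  field_simp

open Real Set in
private lemma I0 (k : ℕ) (s : ℝ) (hs : (k:ℝ)/2 < s) :
    ∫ x : Fin k → ℝ, (1 + ∑ i, x i ^ 2) ^ (-s)
      = π ^ ((k:ℝ)/2) * Gamma (s - (k:ℝ)/2) / Gamma s := by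
  rcases Nat.eq_zero_or_pos k with rfl | hk
  · have hGs : Gamma s ≠ 0 := (Real.Gamma_pos_of_pos (by simpa using hs)).ne'
    simp [integral_unique, Finset.sum_empty, Real.rpow_zero]
    field_simp
    rw [show (univ : Set (Fin 0 → ℝ)) = Set.pi univ (fun _ => univ) by simp,
      measureReal_def, volume_pi_pi]
    simp
  · have key := (EuclideanSpace.volume_preserving_symm_measurableEquiv_toLp (Fin k)).integral_comp
      (MeasurableEquiv.toLp 2 (Fin k → ℝ)).symm.measurableEmbedding
      (fun x : Fin k → ℝ => (1 + ∑ i, x i ^ 2) ^ (-s))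
    rw [← key, ← I0E k hk s hs]
    congr 1
    ext x
    congr 2
    rw [EuclideanSpace.norm_eq]
    rw [Real.sq_sqrt (by positivity)]
    refine Finset.sum_congr rfl fun i _ => ?_
    simp [MeasurableEquiv.toLp, Real.norm_eq_abs, sq_abs]; rfl

open Real Set in
private lemma gen (k : ℕ) (s t b : ℝ) (ht : 0 < t) (hb : 0 < b) (hs : (k:ℝ)/2 < s) :
    ∫ x : Fin k → ℝ, (t + (∑ i, x i ^ 2)/b) ^ (-s)
      = t ^ ((k:ℝ)/2 - s) * b ^ ((k:ℝ)/2)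
        * (π ^ ((k:ℝ)/2) * Gamma (s - (k:ℝ)/2) / Gamma s) := by
  have htb : (0:ℝ) < t * b := mul_pos ht hb
  set R : ℝ := (t*b) ^ (-(1:ℝ)/2) with hR
  have hRpos : 0 < R := Real.rpow_pos_of_pos htb _
  have step1 : ∀ x : Fin k → ℝ,
      (t + (∑ i, x i ^ 2)/b) ^ (-s)
        = t ^ (-s) * (1 + ∑ i, (R • x) i ^ 2) ^ (-s) := by
    intro x
    have hsum : (0:ℝ) ≤ ∑ i, x i ^ 2 := by positivity
    have e1 : ∑ i, (R • x) i ^ 2 = R^2 * ∑ i, x i ^ 2 := by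
      simp [Pi.smul_apply, smul_eq_mul, mul_pow, Finset.mul_sum]
    have e2 : R^2 = (t*b)⁻¹ := by
      rw [hR, ← Real.rpow_natCast ((t*b) ^ (-(1:ℝ)/2)) 2, ← Real.rpow_mul htb.le,
        show (-(1:ℝ)/2) * ((2:ℕ):ℝ) = ((-1 : ℤ):ℝ) by norm_num, Real.rpow_intCast,
        zpow_neg, zpow_one]
    have e3 : t + (∑ i, x i ^ 2)/b = t * (1 + ∑ i, (R • x) i ^ 2) := by
      rw [e1, e2]; field_simp
    rw [e3, Real.mul_rpow ht.le (by positivity)]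
  calc ∫ x : Fin k → ℝ, (t + (∑ i, x i ^ 2)/b) ^ (-s)
      = ∫ x : Fin k → ℝ, t ^ (-s) * (1 + ∑ i, (R • x) i ^ 2) ^ (-s) := by
        exact integral_congr_ae (Filter.Eventually.of_forall step1)
    _ = t ^ (-s) * ∫ x : Fin k → ℝ, (1 + ∑ i, (R • x) i ^ 2) ^ (-s) :=
        integral_const_mul _ _
    _ = t ^ (-s) * ((R ^ Module.finrank ℝ (Fin k → ℝ))⁻¹
          • ∫ x : Fin k → ℝ, (1 + ∑ i, x i ^ 2) ^ (-s)) := by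
        rw [MeasureTheory.Measure.integral_comp_smul_of_nonneg
          (μ := volume) (fun y : Fin k → ℝ => (1 + ∑ i, y i ^ 2) ^ (-s)) R (hR := hRpos.le)]
    _ = t ^ ((k:ℝ)/2 - s) * b ^ ((k:ℝ)/2)
        * (π ^ ((k:ℝ)/2) * Gamma (s - (k:ℝ)/2) / Gamma s) := by
        rw [I0 k s hs, smul_eq_mul]
        have e4 : (R ^ Module.finrank ℝ (Fin k → ℝ))⁻¹ = t ^ ((k:ℝ)/2) * b ^ ((k:ℝ)/2) := by
          rw [Module.finrank_pi, Fintype.card_fin, hR,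
            ← Real.rpow_natCast ((t*b) ^ (-(1:ℝ)/2)) k, ← Real.rpow_mul htb.le,
            ← Real.rpow_neg htb.le, Real.mul_rpow ht.le hb.le]
          norm_num [neg_div]
          ring_nf
        rw [e4, show t ^ ((k:ℝ)/2 - s) = t ^ (-s) * t ^ ((k:ℝ)/2) from by
          rw [← Real.rpow_add ht]; ring_nf]
        ring

open Real Set in
set_option maxHeartbeats 1000000 in
/-- `∬ p_{θ,ν}(x,z)^{1+γ} dx dz = σ^{−γn} C_{ν,m+n}^γ (1 + (m+n)/(ν−2))`
for ν > 2 and γ = −2/(ν+m+n). -/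
theorem stmt_16 (m n : ℕ) (ν σ γ : ℝ) (hν : 2 < ν) (hσ : 0 < σ)
    (hγ : γ = -2 / (ν + m + n))
    (μ : (Fin m → ℝ) → Fin n → ℝ) (hμ : Measurable μ) :
    (∫ z, ∫ x, pjoint m n ν σ μ x z ^ (1 + γ))
      = σ ^ (-(γ * n)) * tC ν (m + n) ^ γ * (1 + (m + n) / (ν - 2)) := by
  have hν0 : (0:ℝ) < ν := by linarith
  have hνmn : (0:ℝ) < ν + m + n := by positivity
  set s : ℝ := (ν + m + n - 2)/2 with hsdef
  have hsn : (n:ℝ)/2 < s := by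
    rw [hsdef]; have : (0:ℝ) ≤ (m:ℝ) := Nat.cast_nonneg m; linarith
  have hsm : (m:ℝ)/2 < s - (n:ℝ)/2 := by
    rw [hsdef]; linarith
  have hC : 0 < tC ν (m + n) := by
    unfold tC
    have h1 : 0 < Real.Gamma ((ν + (m+n:ℕ)) / 2) := Real.Gamma_pos_of_pos (by positivity)
    have h2 : 0 < Real.Gamma (ν / 2) := Real.Gamma_pos_of_pos (by positivity)
    have h3 : (0:ℝ) < (ν * π) ^ (((m+n:ℕ):ℝ)/2) := Real.rpow_pos_of_pos (by positivity) _
    positivity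
  set K : ℝ := (tC ν (m + n) * (σ ^ n)⁻¹) ^ (1 + γ) with hK
  -- Step A: pointwise power
  have stepA : ∀ (z : Fin m → ℝ) (x : Fin n → ℝ),
      pjoint m n ν σ μ x z ^ (1 + γ)
        = K * ((1 + (∑ i, z i ^ 2)/ν) + (∑ j, (x j - μ z j) ^ 2)/(ν * σ^2)) ^ (-s) := by
    intro z x
    have hbase : (0:ℝ) < 1 + (1 / ν) * ((∑ i, z i ^ 2) + (∑ j, (x j - μ z j) ^ 2) / σ ^ 2) := by
      have h1 : (0:ℝ) ≤ ∑ i, z i ^ 2 := by positivity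
      have h2 : (0:ℝ) ≤ (∑ j, (x j - μ z j) ^ 2) / σ ^ 2 := by positivity
      have : (0:ℝ) ≤ (1/ν) * ((∑ i, z i ^ 2) + (∑ j, (x j - μ z j) ^ 2) / σ ^ 2) := by positivity
      linarith
    unfold pjoint
    rw [Real.mul_rpow (by positivity) (Real.rpow_nonneg hbase.le _),
      ← Real.rpow_mul hbase.le, ← hK]
    congr 1
    rw [show (-(ν + m + n) / 2) * (1 + γ) = -s from by
      rw [hγ, hsdef]; field_simp; ring]
    congr 1
    field_simp
    ring
  have inner : ∀ z : Fin m → ℝ,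
      (∫ x, pjoint m n ν σ μ x z ^ (1 + γ))
        = (K * ((ν*σ^2) ^ ((n:ℝ)/2) * (π ^ ((n:ℝ)/2) * Gamma (s - (n:ℝ)/2) / Gamma s)))
          * (1 + (∑ i, z i ^ 2)/ν) ^ (-(s - (n:ℝ)/2)) := by
    intro z
    have ht : 0 < 1 + (∑ i, z i ^ 2)/ν := by positivity
    calc (∫ x, pjoint m n ν σ μ x z ^ (1 + γ))
        = ∫ x : Fin n → ℝ, K * ((fun y : Fin n → ℝ =>
            ((1 + (∑ i, z i ^ 2)/ν) + (∑ j, y j ^ 2)/(ν * σ^2)) ^ (-s)) (x - μ z)) := by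
          refine integral_congr_ae (Filter.Eventually.of_forall fun x => ?_)
          simpa using stepA z x
      _ = K * ∫ x : Fin n → ℝ, (fun y : Fin n → ℝ =>
            ((1 + (∑ i, z i ^ 2)/ν) + (∑ j, y j ^ 2)/(ν * σ^2)) ^ (-s)) (x - μ z) :=
          integral_const_mul _ _
      _ = K * ∫ y : Fin n → ℝ,
            ((1 + (∑ i, z i ^ 2)/ν) + (∑ j, y j ^ 2)/(ν * σ^2)) ^ (-s) := by
          rw [integral_sub_right_eq_self (fun y : Fin n → ℝ =>
            ((1 + (∑ i, z i ^ 2)/ν) + (∑ j, y j ^ 2)/(ν * σ^2)) ^ (-s)) (μ z)]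
      _ = _ := by
          rw [gen n s _ _ ht (by positivity) hsn,
            show ((1:ℝ) + (∑ i, z i ^ 2)/ν) ^ ((n:ℝ)/2 - s)
              = (1 + (∑ i, z i ^ 2)/ν) ^ (-(s - (n:ℝ)/2)) from by congr 1; ring]
          ring
  simp only [inner]
  rw [integral_const_mul, gen m (s - (n:ℝ)/2) 1 ν one_pos hν0 hsm]
  have hs0 : (0:ℝ) < s := by
    rw [hsdef]
    have h1 : (0:ℝ) ≤ (m:ℝ) := Nat.cast_nonneg m
    have h2 : (0:ℝ) ≤ (n:ℝ) := Nat.cast_nonneg n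
    linarith
  have hmid0 : (0:ℝ) < s - (n:ℝ)/2 := by
    have h1 : (0:ℝ) ≤ (m:ℝ) := Nat.cast_nonneg m
    linarith
  have hGs : 0 < Real.Gamma s := Real.Gamma_pos_of_pos hs0
  have hGmid : 0 < Real.Gamma (s - (n:ℝ)/2) := Real.Gamma_pos_of_pos hmid0
  have hG2 : 0 < Real.Gamma ((ν-2)/2) := Real.Gamma_pos_of_pos (by linarith)
  have e0 : s - (n:ℝ)/2 - (m:ℝ)/2 = (ν-2)/2 := by rw [hsdef]; ring
  have hKeq : K = tC ν (m+n) * tC ν (m+n) ^ γ * σ ^ (-((n:ℝ))*(1+γ)) := by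
    rw [hK, Real.mul_rpow hC.le (by positivity), Real.rpow_add hC 1 γ, Real.rpow_one,
      ← Real.rpow_natCast σ n, ← Real.rpow_neg hσ.le, ← Real.rpow_mul hσ.le]
  have hνσ : (ν*σ^2) ^ ((n:ℝ)/2) = ν ^ ((n:ℝ)/2) * σ ^ ((n:ℝ)) := by
    rw [Real.mul_rpow hν0.le (by positivity),
      show (σ:ℝ)^2 = σ ^ ((2:ℕ):ℝ) from (Real.rpow_natCast σ 2).symm,
      ← Real.rpow_mul hσ.le]
    congr 1
    push_cast; ring
  have hA : Real.Gamma ((ν + ((m+n:ℕ):ℝ))/2) = s * Real.Gamma s := by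
    rw [show (ν + ((m+n:ℕ):ℝ))/2 = s + 1 from by rw [hsdef]; push_cast; ring,
      Real.Gamma_add_one hs0.ne']
  have hB : Real.Gamma (ν/2) = ((ν-2)/2) * Real.Gamma ((ν-2)/2) := by
    rw [show ν/2 = (ν-2)/2 + 1 from by ring,
      Real.Gamma_add_one (by intro h; rw [div_eq_zero_iff] at h; rcases h with h|h <;> linarith)]
  have hP : (ν*π) ^ (((m+n:ℕ):ℝ)/2) = ν ^ ((n:ℝ)/2) * ν ^ ((m:ℝ)/2) * π ^ ((n:ℝ)/2) * π ^ ((m:ℝ)/2) := by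
    rw [show ((m+n:ℕ):ℝ)/2 = (n:ℝ)/2 + (m:ℝ)/2 from by push_cast; ring,
      Real.mul_rpow hν0.le pi_pos.le, Real.rpow_add hν0, Real.rpow_add pi_pos]
    ring
  have hσc : σ ^ (-((n:ℝ))*(1+γ)) * σ ^ ((n:ℝ)) = σ ^ (-(γ * (n:ℝ))) := by
    rw [← Real.rpow_add hσ]; congr 1; ring
  rw [Real.one_rpow, e0, hKeq, hνσ]
  set X := tC ν (m+n) ^ γ with hX
  unfold tC
  rw [hA, hB, hP]
  have hσd : σ ^ (-((n:ℝ))*(1+γ)) = σ ^ (-(γ * (n:ℝ))) * (σ ^ ((n:ℝ)))⁻¹ := by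
    rw [← Real.rpow_neg hσ.le, ← Real.rpow_add hσ]; congr 1; ring
  have p6 : ν - 2 ≠ 0 := by linarith
  rw [hσd, show (1:ℝ) + ((m:ℝ) + (n:ℝ))/(ν-2) = s * ((ν-2)/2)⁻¹ from by
    rw [hsdef]; field_simp; ring]
  have p1 : ν ^ ((n:ℝ)/2) ≠ 0 := (Real.rpow_pos_of_pos hν0 _).ne'
  have p2 : ν ^ ((m:ℝ)/2) ≠ 0 := (Real.rpow_pos_of_pos hν0 _).ne'
  have p3 : π ^ ((n:ℝ)/2) ≠ 0 := (Real.rpow_pos_of_pos pi_pos _).ne'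
  have p4 : π ^ ((m:ℝ)/2) ≠ 0 := (Real.rpow_pos_of_pos pi_pos _).ne'
  have p5 : σ ^ ((n:ℝ)) ≠ 0 := (Real.rpow_pos_of_pos hσ _).ne'
  set G1 := Real.Gamma s with hG1'
  set G2 := Real.Gamma (s - (n:ℝ)/2) with hG2'
  set G3 := Real.Gamma ((ν-2)/2) with hG3'
  have q1 : G1 ≠ 0 := hGs.ne'
  have q2 : G2 ≠ 0 := hGmid.ne'
  have q3 : G3 ≠ 0 := hG2.ne'
  have q4 : s ≠ 0 := hs0.ne'
  clear_value X G1 G2 G3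
  field_simp
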